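/- Let A be an associative unital algebra over a field F and L a field extension of F. If for every finite field extension F' of F the algebra F' ⊗_F A has no zero divisors, then L ⊗_F A has no zero divisors. -/

import Mathlib

open scoped TensorProduct

universe u v w

section aux

variable {F : Type u} [Field F] {A : Type v} [Ring A] [Algebra F A]

/-- The tensor-product map with the identity on `A` agrees with `rTensor`. -/
lemma aux_map_eq_rTensor {S T : Type*} [Ring S] [Ring T] [Algebra F S] [Algebra F T]
    (f : S →ₐ[F] T) :
    ⇑(Algebra.TensorProduct.map f (AlgHom.id F A)) = ⇑(LinearMap.rTensor A f.toLinearMap) := by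
  funext z
  induction z using TensorProduct.induction_on with
  | zero => simp
  | tmul s a => simp
  | add u v hu hv => simp only [map_add, hu, hv]

lemma aux_map_injective {S T : Type*} [Ring S] [Ring T] [Algebra F S] [Algebra F T]
    (f : S →ₐ[F] T) (hf : Function.Injective f) :
    Function.Injective (Algebra.TensorProduct.map f (AlgHom.id F A)) := by
  rw [aux_map_eq_rTensor]
  exact Module.Flat.rTensor_preserves_injective_linearMap _ hf

variable {ι : Type v} [DecidableEq ι]

lemma aux_coord_natural (𝒞 : Module.Basis ι F A) {S T : Type*} [AddCommMonoid S] [Module F S]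
    [AddCommMonoid T] [Module F T] (f : S →ₗ[F] T) (z : S ⊗[F] A) (i : ι) :
    (TensorProduct.equivFinsuppOfBasisRight 𝒞) (LinearMap.rTensor A f z) i
      = f ((TensorProduct.equivFinsuppOfBasisRight 𝒞) z i) := by
  induction z using TensorProduct.induction_on with
  | zero => simp
  | tmul s a =>
      simp [TensorProduct.equivFinsuppOfBasisRight_apply_tmul_apply]
  | add u v hu hv => simp [map_add, hu, hv]

/-- Any field which is a finitely generated algebra over `F` has an isomorphic copy inside
the algebraic closure of `F`, which is a finite extension of `F`. -/
lemma aux_field_copy (S : Type*) [Field S] [Algebra F S] [Algebra.FiniteType F S] :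
    ∃ (K : IntermediateField F (AlgebraicClosure F)) (_ : FiniteDimensional F K)
      (ψ : S →ₐ[F] K), Function.Injective ψ := by
  haveI : Module.Finite F S := finite_of_finite_type_of_isJacobsonRing F S
  haveI : FiniteDimensional F S := ‹Module.Finite F S›
  haveI : Algebra.IsAlgebraic F S := Algebra.IsAlgebraic.of_finite F S
  let φ : S →ₐ[F] AlgebraicClosure F := IsAlgClosed.lift
  let e : S ≃ₐ[F] φ.fieldRange := AlgEquiv.ofInjectiveField φ
  exact ⟨φ.fieldRange, Module.Finite.equiv e.toLinearEquiv, e.toAlgHom, e.injective⟩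

/-- For a finitely generated domain `R` over `F` and a nonzero `t : R`, there is an
`F`-algebra homomorphism from `R` to a finite extension of `F` (realized inside the algebraic
closure) which does not kill `t`. -/
lemma aux_exists_hom {R : Type*} [CommRing R] [IsDomain R] [Algebra F R]
    [Algebra.FiniteType F R] (t : R) (ht : t ≠ 0) :
    ∃ (K : IntermediateField F (AlgebraicClosure F)) (_ : FiniteDimensional F K)
      (ψ : R →ₐ[F] K), ψ t ≠ 0 := by
  haveI : IsJacobsonRing R := isJacobsonRing_of_finiteType (A := F)
  have hrad : ((⊥ : Ideal R).jacobson : Ideal R) = ⊥ :=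
    IsJacobsonRing.out' _ (Ideal.bot_prime).isRadical
  obtain ⟨m, hm, htm⟩ : ∃ m : Ideal R, (⊥ ≤ m ∧ m.IsMaximal) ∧ t ∉ m := by
    by_contra hcontra
    push_neg at hcontra
    have : t ∈ (⊥ : Ideal R).jacobson := Ideal.mem_sInf.mpr fun I hI => hcontra I hI
    rw [hrad] at this
    exact ht this
  haveI : m.IsMaximal := hm.2
  letI : Field (R ⧸ m) := Ideal.Quotient.field m
  letI : Algebra F (R ⧸ m) := Ideal.Quotient.algebra F
  haveI : Algebra.FiniteType F (R ⧸ m) :=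
    Algebra.FiniteType.of_surjective (Ideal.Quotient.mkₐ F m)
      Ideal.Quotient.mk_surjective
  obtain ⟨K, hK, ψ₀, hψ₀⟩ := aux_field_copy (F := F) (R ⧸ m)
  refine ⟨K, hK, ψ₀.comp (Ideal.Quotient.mkₐ F m), fun h0 => htm ?_⟩
  have : (Ideal.Quotient.mkₐ F m) t = 0 := by
    apply hψ₀
    rw [map_zero]
    exact h0
  exact Ideal.Quotient.eq_zero_iff_mem.mp this

/-- Continuation form of `aux_exists_hom`, keeping the finite extension abstract. -/
lemma aux_exists_hom2 {R : Type*} [CommRing R] [IsDomain R] [Algebra F R]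
    [Algebra.FiniteType F R] (t : R) (ht : t ≠ 0) {P : Prop}
    (hP : ∀ (K : Type u) [Field K] [Algebra F K], FiniteDimensional F K →
      ∀ ψ : R →ₐ[F] K, ψ t ≠ 0 → P) : P := by
  obtain ⟨K, hK, ψ, hψ⟩ := aux_exists_hom (F := F) t ht
  exact hP K hK ψ hψ

end aux

set_option maxHeartbeats 4000000 in
set_option synthInstance.maxHeartbeats 1000000 in
/-- let `A` be an associative unital algebra over a field `F` and `L` a field
extension of `F`. If for every finite field extension `F'` of `F` the algebra `F' ⊗[F] A`
has no zero divisors, then `L ⊗[F] A` has no zero divisors. -/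
theorem stmt5 (F : Type u) [Field F] (A : Type v) [Ring A] [Algebra F A]
    (L : Type w) [Field L] [Algebra F L]
    (h : ∀ (F' : Type u) [Field F'] [Algebra F F'], FiniteDimensional F F' →
      NoZeroDivisors (F' ⊗[F] A)) :
    NoZeroDivisors (L ⊗[F] A) := by
  classical
  constructor
  intro x y hxy
  by_contra hcon
  push_neg at hcon
  obtain ⟨hx, hy⟩ := hcon
  -- a basis of A over F
  set ι := Module.Free.ChooseBasisIndex F A with hι
  let 𝒞 : Module.Basis ι F A := Module.Free.chooseBasis F A
  -- coordinates of x and y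
  set c : ι →₀ L := (TensorProduct.equivFinsuppOfBasisRight (M := L) 𝒞) x with hc
  set d : ι →₀ L := (TensorProduct.equivFinsuppOfBasisRight (M := L) 𝒞) y with hd
  have hxc : x = c.sum fun i m => m ⊗ₜ[F] 𝒞 i := by
    rw [hc, ← TensorProduct.equivFinsuppOfBasisRight_symm_apply, LinearEquiv.symm_apply_apply]
  have hyd : y = d.sum fun i m => m ⊗ₜ[F] 𝒞 i := by
    rw [hd, ← TensorProduct.equivFinsuppOfBasisRight_symm_apply, LinearEquiv.symm_apply_apply]
  -- the finitely generated subalgebra R of L containing the coordinates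
  obtain ⟨R, hRft, hcR, hdR⟩ : ∃ R : Subalgebra F L,
      Algebra.FiniteType F R ∧ (∀ i, c i ∈ R) ∧ (∀ i, d i ∈ R) := by
    refine ⟨Algebra.adjoin F ((c.support.image c ∪ d.support.image d : Finset L) : Set L),
      (Subalgebra.fg_iff_finiteType _).mp (Subalgebra.fg_adjoin_finset _), ?_, ?_⟩
    · intro i
      by_cases hi : c i = 0
      · rw [hi]; exact zero_mem _
      · exact Algebra.subset_adjoin (by
          simp only [Finset.coe_union, Set.mem_union, Finset.coe_image, Set.mem_image,
            Finset.mem_coe, Finsupp.mem_support_iff]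
          exact Or.inl ⟨i, hi, rfl⟩)
    · intro i
      by_cases hi : d i = 0
      · rw [hi]; exact zero_mem _
      · exact Algebra.subset_adjoin (by
          simp only [Finset.coe_union, Set.mem_union, Finset.coe_image, Set.mem_image,
            Finset.mem_coe, Finsupp.mem_support_iff]
          exact Or.inr ⟨i, hi, rfl⟩)
  haveI : Algebra.FiniteType F R := hRft
  -- lifts of x and y in R ⊗ A
  set x' : R ⊗[F] A := ∑ i ∈ c.support, (⟨c i, hcR i⟩ : R) ⊗ₜ[F] 𝒞 i with hx'
  set y' : R ⊗[F] A := ∑ i ∈ d.support, (⟨d i, hdR i⟩ : R) ⊗ₜ[F] 𝒞 i with hy'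
  set f : R ⊗[F] A →ₐ[F] L ⊗[F] A := Algebra.TensorProduct.map R.val (AlgHom.id F A) with hf
  have hfx : f x' = x := by
    rw [hx', map_sum, hxc, Finsupp.sum]
    refine Finset.sum_congr rfl fun i _ => ?_
    simp [hf]
  have hfy : f y' = y := by
    rw [hy', map_sum, hyd, Finsupp.sum]
    refine Finset.sum_congr rfl fun i _ => ?_
    simp [hf]
  have hfinj : Function.Injective f := aux_map_injective R.val Subtype.val_injective
  have hxy' : x' * y' = 0 := by
    apply hfinj
    rw [map_mul, hfx, hfy, hxy, map_zero]
  -- nonzero coordinates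
  have hcne : c ≠ 0 := fun hc0 => hx (by rw [hxc, hc0, Finsupp.sum_zero_index])
  have hdne : d ≠ 0 := fun hd0 => hy (by rw [hyd, hd0, Finsupp.sum_zero_index])
  obtain ⟨i₀, hi₀⟩ := Finsupp.ne_iff.mp hcne
  obtain ⟨j₀, hj₀⟩ := Finsupp.ne_iff.mp hdne
  simp only [Finsupp.coe_zero, Pi.zero_apply] at hi₀ hj₀
  set r : R := (TensorProduct.equivFinsuppOfBasisRight (M := R) 𝒞) x' i₀ with hr
  set s : R := (TensorProduct.equivFinsuppOfBasisRight (M := R) 𝒞) y' j₀ with hs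
  have hrval : (r : L) = c i₀ := by
    rw [hr]
    have := aux_coord_natural 𝒞 R.val.toLinearMap x' i₀
    rw [← congrFun (aux_map_eq_rTensor (A := A) R.val) x', hfx, ← hc] at this
    exact this.symm
  have hsval : (s : L) = d j₀ := by
    rw [hs]
    have := aux_coord_natural 𝒞 R.val.toLinearMap y' j₀
    rw [← congrFun (aux_map_eq_rTensor (A := A) R.val) y', hfy, ← hd] at this
    exact this.symm
  have hrs : r * s ≠ 0 := by
    intro h0
    have : (r : L) * (s : L) = 0 := by
      rw [← Subalgebra.coe_mul, h0, Subalgebra.coe_zero]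
    rw [hrval, hsval] at this
    rcases mul_eq_zero.mp this with h1 | h1
    · exact hi₀ h1
    · exact hj₀ h1
  -- homomorphism to a finite extension not killing r * s
  refine aux_exists_hom2 (F := F) (r * s) hrs ?_
  intro K _ _ hK ψ hψ
  haveI : FiniteDimensional F K := hK
  haveI : NoZeroDivisors (K ⊗[F] A) := h K hK
  set g : R ⊗[F] A →ₐ[F] K ⊗[F] A := Algebra.TensorProduct.map ψ (AlgHom.id F A) with hg
  have hψr : ψ r ≠ 0 := fun h0 => hψ (by rw [map_mul, h0, zero_mul])
  have hψs : ψ s ≠ 0 := fun h0 => hψ (by rw [map_mul, h0, mul_zero])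
  have hgx : g x' ≠ 0 := by
    intro h0
    have hco : (TensorProduct.equivFinsuppOfBasisRight (M := K) 𝒞) (g x') i₀ = ψ r := by
      rw [hg, congrFun (aux_map_eq_rTensor (A := A) ψ) x', aux_coord_natural, hr]
      rfl
    rw [h0, map_zero, Finsupp.coe_zero] at hco
    exact hψr hco.symm
  have hgy : g y' ≠ 0 := by
    intro h0
    have hco : (TensorProduct.equivFinsuppOfBasisRight (M := K) 𝒞) (g y') j₀ = ψ s := by
      rw [hg, congrFun (aux_map_eq_rTensor (A := A) ψ) y', aux_coord_natural, hs]
      rfl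
    rw [h0, map_zero, Finsupp.coe_zero] at hco
    exact hψs hco.symm
  have : g x' * g y' = 0 := by rw [← map_mul, hxy', map_zero]
  rcases mul_eq_zero.mp this with h1 | h1
  · exact hgx h1
  · exact hgy h1
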